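/- Let n be a positive integer, d a nonnegative integer, and let a_1 < a_2 < \cdots < a_n and c_1 < c_2 < \cdots < c_n be nonnegative integers with a_i \le c_i for all i. Then det( gf1(a_i + d, c_j + d) )_{i,j=1}^n / det( gf1(a_i, c_j) )_{i,j=1}^n = \prod_{m=1}^n [ ( (q^{2d+2};q^2)_{c_m} / ( q^{d c_m} (q^2;q^2)_{c_m} ) ) * ( q^{d a_m} (q^2;q^2)_{a_m} / (q^{2d+2};q^2)_{a_m} ) ], assuming the denominator determinant is nonzero. -/

import Mathlib

/-- The field of rational functions in the three indeterminates `X`, `Y`, `q`. -/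
noncomputable abbrev MyF : Type := FractionRing (MvPolynomial (Fin 3) ℚ)

/-- The indeterminate `X`. -/
noncomputable def Xv : MyF := algebraMap (MvPolynomial (Fin 3) ℚ) MyF (MvPolynomial.X 0)
/-- The indeterminate `Y`. -/
noncomputable def Yv : MyF := algebraMap (MvPolynomial (Fin 3) ℚ) MyF (MvPolynomial.X 1)
/-- The indeterminate `q`. -/
noncomputable def qv : MyF := algebraMap (MvPolynomial (Fin 3) ℚ) MyF (MvPolynomial.X 2)

/-- `gf1(a,c) = (2q^a)^{a-c} ∏_{j=1}^{c-a} ((X q^{j-1} + Y q^{1-j})(1-q^{2a+2j}))/(1-q^{2j})`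
for `c ≥ a`, and `0` otherwise (the generating function of weighted lattice paths from
`(a,a)` to `(c,0)` in the half-hexagon setup). -/
noncomputable def gfone (a c : ℕ) : MyF :=
  if a ≤ c then
    (2 * qv ^ (a : ℤ)) ^ ((a : ℤ) - (c : ℤ)) *
      ∏ t ∈ Finset.range (c - a),
        ((Xv * qv ^ ((t : ℤ) + 1 - 1) + Yv * qv ^ (1 - ((t : ℤ) + 1))) *
            (1 - qv ^ (2 * (a : ℤ) + 2 * ((t : ℤ) + 1)))) /
          (1 - qv ^ (2 * ((t : ℤ) + 1)))
  else 0

/-- q-Pochhammer symbol `(a; q)_n = ∏_{j=0}^{n-1} (1 - a q^j)`. -/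
noncomputable def qPoch (a q : MyF) (n : ℕ) : MyF :=
  ∏ j ∈ Finset.range n, (1 - a * q ^ j)


lemma qv_ne_zero : qv ≠ 0 := by
  unfold qv
  intro h
  have := (map_eq_zero_iff _ (IsFractionRing.injective (MvPolynomial (Fin 3) ℚ) MyF)).mp h
  exact MvPolynomial.X_ne_zero 2 this

lemma qv_pow_ne_one {k : ℕ} (hk : 0 < k) : qv ^ k ≠ 1 := by
  unfold qv
  intro h
  rw [← map_pow, ← map_one (algebraMap (MvPolynomial (Fin 3) ℚ) MyF)] at h
  have h2 := IsFractionRing.injective (MvPolynomial (Fin 3) ℚ) MyF h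
  have h3 := congrArg (MvPolynomial.eval (fun _ => (2:ℚ))) h2
  simp at h3
  have h4 : (1:ℚ) < 2 ^ k := one_lt_pow₀ (by norm_num) hk.ne'
  rw [h3] at h4
  exact lt_irrefl _ h4

lemma one_sub_qv_pow_ne {k : ℕ} (hk : 0 < k) : (1 : MyF) - qv ^ k ≠ 0 := by
  intro h
  exact qv_pow_ne_one hk (sub_eq_zero.mp h).symm

lemma qPoch_ne_zero {m : ℕ} (hm : 0 < m) (n : ℕ) : qPoch (qv ^ m) (qv ^ 2) n ≠ 0 := by
  unfold qPoch
  rw [Finset.prod_ne_zero_iff]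
  intro j _
  rw [← pow_mul, ← pow_add]
  exact one_sub_qv_pow_ne (by omega)


lemma qPoch_split (x : MyF) (q : MyF) (a k : ℕ) :
    qPoch x q (a + k) = qPoch x q a * ∏ t ∈ Finset.range k, (1 - x * q ^ (a + t)) := by
  unfold qPoch
  exact Finset.prod_range_add _ a k

/-- gfone's inner product decomposed. -/
lemma gfone_prod (a k : ℕ) :
    (∏ t ∈ Finset.range k,
        ((Xv * qv ^ ((t : ℤ) + 1 - 1) + Yv * qv ^ (1 - ((t : ℤ) + 1))) *
            (1 - qv ^ (2 * (a : ℤ) + 2 * ((t : ℤ) + 1)))) /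
          (1 - qv ^ (2 * ((t : ℤ) + 1))))
    = (∏ t ∈ Finset.range k,
        (Xv * qv ^ ((t : ℤ) + 1 - 1) + Yv * qv ^ (1 - ((t : ℤ) + 1))) /
          (1 - qv ^ (2 * ((t : ℤ) + 1)))) *
      ∏ t ∈ Finset.range k, (1 - qv ^ (2 * a + 2 * t + 2)) := by
  rw [← Finset.prod_mul_distrib]
  apply Finset.prod_congr rfl
  intro t _
  have : qv ^ (2 * (a : ℤ) + 2 * ((t : ℤ) + 1)) = qv ^ (2 * a + 2 * t + 2) := by
    have e : (2 * (a:ℤ) + 2 * ((t:ℤ) + 1)) = ((2 * a + 2 * t + 2 : ℕ) : ℤ) := by push_cast; ring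
    rw [e, zpow_natCast]
  rw [this]
  ring

lemma key_alg (V Q P W Na Nad Pa Pad : MyF) (hV : V ≠ 0) (hQ : Q ≠ 0) (hP : P ≠ 0)
    (hNa : Na ≠ 0) (hPa : Pa ≠ 0) (hPad : Pad ≠ 0) :
    (V * Q)⁻¹ * (W * Nad) = Pad * Nad / (P * Q * (Pa * Na)) * (P * Pa / Pad) * (V⁻¹ * (W * Na)) := by
  field_simp

lemma gfone_shift (d a c : ℕ) :
    gfone (a + d) (c + d)
      = (qPoch (qv ^ (2 * d + 2)) (qv ^ 2) c / (qv ^ (d * c) * qPoch (qv ^ 2) (qv ^ 2) c)) *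
          (qv ^ (d * a) * qPoch (qv ^ 2) (qv ^ 2) a / qPoch (qv ^ (2 * d + 2)) (qv ^ 2) a) *
        gfone a c := by
  by_cases h : a ≤ c
  · obtain ⟨k, rfl⟩ : ∃ k, c = a + k := ⟨c - a, by omega⟩
    rw [gfone, gfone, if_pos (by omega), if_pos (by omega)]
    have hk1 : a + d + k - (a + d) = k := by omega
    have hk2 : a + k - a = k := by omega
    rw [show a + k + d = a + d + k by ring, hk1, hk2, gfone_prod, gfone_prod]
    -- convert zpow prefactors
    have e1 : ((a + d : ℕ) : ℤ) - ((a + d + k : ℕ) : ℤ) = -(k : ℤ) := by push_cast; ring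
    have e2 : ((a : ℕ) : ℤ) - ((a + k : ℕ) : ℤ) = -(k : ℤ) := by push_cast; ring
    rw [e1, e2]
    have e3 : qv ^ ((a + d : ℕ) : ℤ) = qv ^ (a + d) := zpow_natCast _ _
    have e4 : qv ^ ((a : ℕ) : ℤ) = qv ^ a := zpow_natCast _ _
    rw [e3, e4, zpow_neg, zpow_neg, zpow_natCast, zpow_natCast]
    -- split the big pochhammers
    rw [qPoch_split (qv ^ (2 * d + 2)) (qv ^ 2) a k, qPoch_split (qv ^ 2) (qv ^ 2) a k]
    have e5 : ∀ t ∈ Finset.range k,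
        (1 - qv ^ (2 * d + 2) * (qv ^ 2) ^ (a + t)) = (1 - qv ^ (2 * (a + d) + 2 * t + 2)) := by
      intro t _
      rw [← pow_mul, ← pow_add]
      congr 2
      ring
    have e6 : ∀ t ∈ Finset.range k,
        (1 - qv ^ 2 * (qv ^ 2) ^ (a + t)) = (1 - qv ^ (2 * a + 2 * t + 2)) := by
      intro t _
      rw [← pow_mul, ← pow_add]
      congr 2
      ring
    rw [Finset.prod_congr rfl e5, Finset.prod_congr rfl e6]
    have hPa : qPoch (qv ^ 2) (qv ^ 2) a ≠ 0 := qPoch_ne_zero (by omega) a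
    have hPad : qPoch (qv ^ (2 * d + 2)) (qv ^ 2) a ≠ 0 := qPoch_ne_zero (by omega) a
    have hNa : (∏ t ∈ Finset.range k, (1 - qv ^ (2 * a + 2 * t + 2))) ≠ 0 := by
      rw [Finset.prod_ne_zero_iff]
      intro t _
      exact one_sub_qv_pow_ne (by omega)
    have hq : qv ≠ 0 := qv_ne_zero
    have hU : (2 * qv ^ (a + d)) ^ k = (2 * qv ^ a) ^ k * qv ^ (d * k) := by ring
    have hE : qv ^ (d * (a + k)) = qv ^ (d * a) * qv ^ (d * k) := by ring
    rw [hU, hE]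
    set W := (∏ t ∈ Finset.range k,
        (Xv * qv ^ ((t : ℤ) + 1 - 1) + Yv * qv ^ (1 - ((t : ℤ) + 1))) /
          (1 - qv ^ (2 * ((t : ℤ) + 1)))) with hW
    set Na := (∏ t ∈ Finset.range k, (1 - qv ^ (2 * a + 2 * t + 2))) with hNa2
    set Nad := (∏ t ∈ Finset.range k, (1 - qv ^ (2 * (a + d) + 2 * t + 2))) with hNad2
    set Pa := qPoch (qv ^ 2) (qv ^ 2) a with hPa2
    set Pad := qPoch (qv ^ (2 * d + 2)) (qv ^ 2) a with hPad2
    have hV : (2 * qv ^ a) ^ k ≠ 0 := pow_ne_zero _ (mul_ne_zero two_ne_zero (pow_ne_zero _ hq))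
    have hqda : qv ^ (d * a) ≠ 0 := pow_ne_zero _ hq
    have hqdk : qv ^ (d * k) ≠ 0 := pow_ne_zero _ hq
    exact key_alg _ _ _ _ _ _ _ _ hV hqdk hqda hNa hPa hPad
  · rw [gfone, gfone, if_neg (by omega), if_neg h]
    simp
/-- Lai's observation for half hexagons: for `a_1 < ⋯ < a_n`, `c_1 < ⋯ < c_n`
with `a_i ≤ c_i`, the quotient of the two `n × n` determinants
`det(gf1(a_i+d, c_j+d)) / det(gf1(a_i, c_j))` equals
`∏_{m=1}^n ((q^{2d+2};q²)_{c_m} / (q^{d c_m} (q²;q²)_{c_m})) ⬝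
(q^{d a_m} (q²;q²)_{a_m} / (q^{2d+2};q²)_{a_m})`,
provided the denominator determinant is nonzero. -/
theorem det_gfone_quotient (n : ℕ) (hn : 0 < n) (d : ℕ) (a c : Fin n → ℕ)
    (ha : StrictMono a) (hc : StrictMono c) (hac : ∀ i, a i ≤ c i)
    (hdet : Matrix.det (Matrix.of fun i j => gfone (a i) (c j)) ≠ 0) :
    Matrix.det (Matrix.of fun i j => gfone (a i + d) (c j + d)) /
        Matrix.det (Matrix.of fun i j => gfone (a i) (c j))
      = ∏ m : Fin n,
          (qPoch (qv ^ (2 * d + 2)) (qv ^ 2) (c m) /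
              (qv ^ (d * c m) * qPoch (qv ^ 2) (qv ^ 2) (c m))) *
            (qv ^ (d * a m) * qPoch (qv ^ 2) (qv ^ 2) (a m) /
              qPoch (qv ^ (2 * d + 2)) (qv ^ 2) (a m)) := by
  have h1 : Matrix.det (Matrix.of fun i j => gfone (a i + d) (c j + d))
      = (∏ j, (qPoch (qv ^ (2 * d + 2)) (qv ^ 2) (c j) /
            (qv ^ (d * c j) * qPoch (qv ^ 2) (qv ^ 2) (c j)))) *
        Matrix.det (Matrix.of fun i j =>
          (qv ^ (d * a i) * qPoch (qv ^ 2) (qv ^ 2) (a i) /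
            qPoch (qv ^ (2 * d + 2)) (qv ^ 2) (a i)) * gfone (a i) (c j)) := by
    rw [← Matrix.det_mul_row]
    congr 1
    ext i j
    simp only [Matrix.of_apply]
    rw [gfone_shift]
    ring
  have h2 : Matrix.det (Matrix.of fun i j =>
        (qv ^ (d * a i) * qPoch (qv ^ 2) (qv ^ 2) (a i) /
          qPoch (qv ^ (2 * d + 2)) (qv ^ 2) (a i)) * gfone (a i) (c j))
      = (∏ i, (qv ^ (d * a i) * qPoch (qv ^ 2) (qv ^ 2) (a i) /
          qPoch (qv ^ (2 * d + 2)) (qv ^ 2) (a i))) *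
        Matrix.det (Matrix.of fun i j => gfone (a i) (c j)) :=
    Matrix.det_mul_column _ _
  rw [h1, h2, mul_div_assoc, mul_div_assoc, div_self hdet, mul_one, Finset.prod_mul_distrib]
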